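/- (Theorem 3.5 (ii), splittable 3/2-dual approximation.) Let T > 0 with s_i ≤ T for every class i, let I_exp = { i : s_i > T/2 } and I_chp = { i : s_i ≤ T/2 }, let β_i = ⌈2·P(C_i)/T⌉, L_split = P(J) + Σ_{i∈I_chp} s_i + Σ_{i∈I_exp} β_i·s_i, and m_exp = Σ_{i∈I_exp} β_i. If m·T ≥ L_split and m ≥ m_exp, then there exists a splittable schedule whose makespan is at most (3/2)·T. -/

import Mathlib

open Classical Finset

set_option linter.unusedSectionVars false
set_option linter.unusedVariables false

noncomputable section SpAux


def clampF (A B r : ℝ) : ℝ := max A (min B r)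

lemma clampF_mono (A B : ℝ) {r r' : ℝ} (h : r ≤ r') : clampF A B r ≤ clampF A B r' :=
  max_le_max le_rfl (min_le_min le_rfl h)

lemma le_clampF (A B r : ℝ) : A ≤ clampF A B r := le_max_left _ _

lemma clampF_le {A B : ℝ} (r : ℝ) (hAB : A ≤ B) : clampF A B r ≤ B :=
  max_le hAB (min_le_left _ _)

lemma clampF_swap {A B r r' : ℝ} (hAB : A ≤ B) (hrr : r ≤ r') :
    clampF A B r' - clampF A B r = clampF r r' B - clampF r r' A := by
  simp only [clampF, max_def, min_def]
  split_ifs <;> linarith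

lemma clampF_pos {A B r r' : ℝ} (hAB : A ≤ B) (h : 0 < clampF A B r' - clampF A B r) :
    A < r' ∧ r < B := by
  simp only [clampF, max_def, min_def] at h
  constructor <;> [skip; skip] <;> by_contra hc <;> push_neg at hc <;>
    (split_ifs at h <;> linarith)

lemma clampF_left {A B r : ℝ} (hrA : r ≤ A) (hAB : A ≤ B) : clampF A B r = A := by
  simp only [clampF, max_def, min_def]
  split_ifs <;> linarith

lemma clampF_right {A B r : ℝ} (hBr : B ≤ r) (hAB : A ≤ B) : clampF A B r = B := by
  simp only [clampF, max_def, min_def]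
  split_ifs <;> linarith

lemma clampF_eq_self {A B r : ℝ} (h1 : A ≤ r) (h2 : r ≤ B) : clampF A B r = r := by
  simp only [clampF, max_def, min_def]
  split_ifs <;> linarith

lemma tele {α : Type*} [LinearOrder α] (G : ℝ → ℝ) (w : α → ℝ) (base : ℝ) (S : Finset α) :
    (∑ j ∈ S, (G ((base + ∑ j' ∈ S.filter (fun j' => j' < j), w j') + w j)
      - G (base + ∑ j' ∈ S.filter (fun j' => j' < j), w j'))) =
    G (base + ∑ j ∈ S, w j) - G base := by
  classical
  induction S using Finset.induction_on_max with
  | empty => simp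
  | insert a S ha ih =>
    have hna : a ∉ S := fun h => absurd (ha a h) (lt_irrefl a)
    rw [Finset.sum_insert hna]
    have h1 : (insert a S).filter (fun j' => j' < a) = S := by
      rw [Finset.filter_insert]
      simp only [lt_irrefl, if_false]
      exact Finset.filter_true_of_mem ha
    have h2 : ∀ j ∈ S, (insert a S).filter (fun j' => j' < j) = S.filter (fun j' => j' < j) := by
      intro j hj
      rw [Finset.filter_insert]
      have : ¬ a < j := not_lt_of_gt (ha j hj)
      simp [this]
    have h3 : (∑ x ∈ S, (G ((base + ∑ j' ∈ (insert a S).filter (fun j' => j' < x), w j') + w x)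
        - G (base + ∑ j' ∈ (insert a S).filter (fun j' => j' < x), w j')))
        = ∑ x ∈ S, (G ((base + ∑ j' ∈ S.filter (fun j' => j' < x), w j') + w x)
        - G (base + ∑ j' ∈ S.filter (fun j' => j' < x), w j')) :=
      Finset.sum_congr rfl (fun j hj => by rw [h2 j hj])
    rw [h1, h3, ih, Finset.sum_insert hna]
    ring

lemma count_indicator (m : ℕ) (B b : ℤ) (v : ℝ) (h0 : 0 ≤ B) (hb : 0 ≤ b) (hm : B + b ≤ (m : ℤ)) :
    (∑ k ∈ Finset.range m, (if B ≤ (k:ℤ) ∧ (k:ℤ) < B + b then v else 0)) = (b : ℝ) * v := by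
  rw [Finset.sum_ite, Finset.sum_const, Finset.sum_const, smul_zero, add_zero]
  have hset : (Finset.range m).filter (fun k : ℕ => B ≤ (k:ℤ) ∧ (k:ℤ) < B + b)
      = Finset.Ico B.toNat (B+b).toNat := by
    ext k
    simp only [Finset.mem_filter, Finset.mem_range, Finset.mem_Ico]
    omega
  rw [hset, Nat.card_Ico, nsmul_eq_mul]
  congr 1
  have hle : B.toNat ≤ (B+b).toNat := by omega
  rw [Nat.cast_sub hle]
  rw [show ((B+b).toNat : ℝ) = ((B:ℝ) + b) by
        rw [show (((B+b).toNat : ℕ) : ℝ) = (((B+b).toNat : ℤ) : ℝ) by push_cast; ring,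
          Int.toNat_of_nonneg (by omega : (0:ℤ) ≤ B + b)]; push_cast; ring,
      show ((B.toNat : ℕ) : ℝ) = (B:ℝ) by
        rw [show ((B.toNat : ℕ) : ℝ) = ((B.toNat : ℤ) : ℝ) by push_cast; ring,
          Int.toNat_of_nonneg h0]]
  ring


variable {γ ι : Type*} [Fintype γ] [Fintype ι] [LinearOrder γ] [LinearOrder ι]

/-- processing volume of class `i` -/
def Pc (cl : ι → γ) (t : ι → ℝ) (s : γ → ℝ) (T : ℝ) (i : γ) : ℝ :=
  ∑ j ∈ univ.filter (fun j => cl j = i), t j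

/-- cheap classes -/
def Ke (cl : ι → γ) (t : ι → ℝ) (s : γ → ℝ) (T : ℝ) : Finset γ :=
  univ.filter (fun i => s i ≤ T / 2)

/-- expensive classes -/
def Ee (cl : ι → γ) (t : ι → ℝ) (s : γ → ℝ) (T : ℝ) : Finset γ :=
  univ.filter (fun i => T / 2 < s i)

/-- number of machines for an expensive class -/
def bi (cl : ι → γ) (t : ι → ℝ) (s : γ → ℝ) (T : ℝ) (i : γ) : ℤ :=
  ⌈2 * Pc cl t s T i / T⌉

/-- start position of cheap class `i` on the cheap line -/
def av (cl : ι → γ) (t : ι → ℝ) (s : γ → ℝ) (T : ℝ) (i : γ) : ℝ :=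
  ∑ i' ∈ (Ke cl t s T).filter (fun i' => i' < i), (s i' + Pc cl t s T i')

/-- start position of a cheap job on the cheap line -/
def pv (cl : ι → γ) (t : ι → ℝ) (s : γ → ℝ) (T : ℝ) (j : ι) : ℝ :=
  av cl t s T (cl j) + s (cl j) +
  ∑ j' ∈ (univ.filter (fun j' => cl j' = cl j)).filter (fun j' => j' < j), t j'

/-- total cheap volume -/
def Vv (cl : ι → γ) (t : ι → ℝ) (s : γ → ℝ) (T : ℝ) : ℝ :=
  ∑ i ∈ Ke cl t s T, (s i + Pc cl t s T i)

/-- first machine index of expensive class `i` -/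
def Bv (cl : ι → γ) (t : ι → ℝ) (s : γ → ℝ) (T : ℝ) (i : γ) : ℤ :=
  ∑ i' ∈ (Ee cl t s T).filter (fun i' => i' < i), bi cl t s T i'

/-- expensive load on machine `k` -/
def Dv (cl : ι → γ) (t : ι → ℝ) (s : γ → ℝ) (T : ℝ) (k : ℤ) : ℝ :=
  ∑ i ∈ (Ee cl t s T).filter
    (fun i => Bv cl t s T i ≤ k ∧ k < Bv cl t s T i + bi cl t s T i),
    (s i + Pc cl t s T i / (bi cl t s T i : ℝ))

/-- free capacity of machine `k` -/
def capv (cl : ι → γ) (t : ι → ℝ) (s : γ → ℝ) (T : ℝ) (k : ℤ) : ℝ :=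
  max 0 (T - Dv cl t s T k)

/-- prefix sums of free capacities -/
def Fv (cl : ι → γ) (t : ι → ℝ) (s : γ → ℝ) (T : ℝ) (n : ℕ) : ℝ :=
  ∑ k ∈ Finset.range n, capv cl t s T (k : ℤ)

section basic
variable (cl : ι → γ) (t : ι → ℝ) (s : γ → ℝ) (T : ℝ)
variable (ht : ∀ j, 0 < t j) (hs : ∀ i, 0 < s i) (hT : 0 < T)

include ht in
lemma Pc_nonneg (i : γ) : 0 ≤ Pc cl t s T i :=
  Finset.sum_nonneg fun j _ => (ht j).le

include ht in
lemma Pc_pos {i : γ} (hj : ∃ j, cl j = i) : 0 < Pc cl t s T i := by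
  obtain ⟨j, hj⟩ := hj
  exact Finset.sum_pos' (fun j _ => (ht j).le)
    ⟨j, Finset.mem_filter.2 ⟨Finset.mem_univ _, hj⟩, ht j⟩

include ht hT in
lemma bi_nonneg (i : γ) : 0 ≤ bi cl t s T i :=
  Int.ceil_nonneg (by have := Pc_nonneg cl t s T ht i; positivity)

include ht hT in
lemma bi_pos {i : γ} (hj : ∃ j, cl j = i) : 0 < bi cl t s T i := by
  have := Pc_pos cl t s T ht hj
  exact Int.ceil_pos.2 (by positivity)

include ht hT in
lemma Pc_div_bi_le {i : γ} (hj : ∃ j, cl j = i) :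
    Pc cl t s T i / (bi cl t s T i : ℝ) ≤ T / 2 := by
  have hb := bi_pos cl t s T ht hT hj
  have hb' : (0:ℝ) < (bi cl t s T i : ℝ) := by exact_mod_cast hb
  have hc : 2 * Pc cl t s T i / T ≤ (bi cl t s T i : ℝ) := Int.le_ceil _
  rw [div_le_iff₀ hb']
  rw [div_le_iff₀ hT] at hc
  nlinarith

include ht hT in
lemma bi_mul (i : γ) (hj : ∃ j, cl j = i) :
    (bi cl t s T i : ℝ) * (s i + Pc cl t s T i / (bi cl t s T i : ℝ))
      = (bi cl t s T i : ℝ) * s i + Pc cl t s T i := by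
  have hb := bi_pos cl t s T ht hT hj
  have hb' : ((bi cl t s T i : ℝ)) ≠ 0 := by
    exact_mod_cast hb.ne'
  field_simp

include ht hT in
lemma Bv_nonneg (i : γ) : 0 ≤ Bv cl t s T i :=
  Finset.sum_nonneg fun i' _ => bi_nonneg cl t s T ht hT i'

include ht hT in
lemma Bv_mono {i i' : γ} (hi : i ∈ Ee cl t s T) (hlt : i < i') :
    Bv cl t s T i + bi cl t s T i ≤ Bv cl t s T i' := by
  have hins : insert i ((Ee cl t s T).filter (fun i'' => i'' < i))
      ⊆ (Ee cl t s T).filter (fun i'' => i'' < i') := by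
    intro a ha
    rcases Finset.mem_insert.1 ha with rfl | ha
    · exact Finset.mem_filter.2 ⟨hi, hlt⟩
    · obtain ⟨h1, h2⟩ := Finset.mem_filter.1 ha
      exact Finset.mem_filter.2 ⟨h1, h2.trans hlt⟩
  have hnm : i ∉ (Ee cl t s T).filter (fun i'' => i'' < i) := by
    simp [Finset.mem_filter]
  calc Bv cl t s T i + bi cl t s T i
      = ∑ a ∈ insert i ((Ee cl t s T).filter (fun i'' => i'' < i)), bi cl t s T a := by
        rw [Finset.sum_insert hnm, Bv]; ring
    _ ≤ Bv cl t s T i' :=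
        Finset.sum_le_sum_of_subset_of_nonneg hins
          (fun a _ _ => bi_nonneg cl t s T ht hT a)

include ht hT in
lemma Bv_add_le {i : γ} (hi : i ∈ Ee cl t s T) :
    Bv cl t s T i + bi cl t s T i ≤ ∑ i' ∈ Ee cl t s T, bi cl t s T i' := by
  have hins : insert i ((Ee cl t s T).filter (fun i'' => i'' < i)) ⊆ Ee cl t s T := by
    intro a ha
    rcases Finset.mem_insert.1 ha with rfl | ha
    · exact hi
    · exact (Finset.mem_filter.1 ha).1
  have hnm : i ∉ (Ee cl t s T).filter (fun i'' => i'' < i) := by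
    simp [Finset.mem_filter]
  calc Bv cl t s T i + bi cl t s T i
      = ∑ a ∈ insert i ((Ee cl t s T).filter (fun i'' => i'' < i)), bi cl t s T a := by
        rw [Finset.sum_insert hnm, Bv]; ring
    _ ≤ _ := Finset.sum_le_sum_of_subset_of_nonneg hins
          (fun a _ _ => bi_nonneg cl t s T ht hT a)

include ht hT in
lemma Dv_window_unique {k : ℤ} {i i' : γ} (hi : i ∈ Ee cl t s T) (hi' : i' ∈ Ee cl t s T)
    (h1 : Bv cl t s T i ≤ k ∧ k < Bv cl t s T i + bi cl t s T i)
    (h2 : Bv cl t s T i' ≤ k ∧ k < Bv cl t s T i' + bi cl t s T i') : i = i' := by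
  rcases lt_trichotomy i i' with h | h | h
  · have := Bv_mono cl t s T ht hT hi h; omega
  · exact h
  · have := Bv_mono cl t s T ht hT hi' h; omega

include ht hs in
lemma av_nonneg (i : γ) : 0 ≤ av cl t s T i :=
  Finset.sum_nonneg fun i' _ => by
    have := Pc_nonneg cl t s T ht i'; have := (hs i').le; linarith

include ht hs in
lemma av_mono {i i' : γ} (hi : i ∈ Ke cl t s T) (hlt : i < i') :
    av cl t s T i + (s i + Pc cl t s T i) ≤ av cl t s T i' := by
  have hins : insert i ((Ke cl t s T).filter (fun i'' => i'' < i))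
      ⊆ (Ke cl t s T).filter (fun i'' => i'' < i') := by
    intro a ha
    rcases Finset.mem_insert.1 ha with rfl | ha
    · exact Finset.mem_filter.2 ⟨hi, hlt⟩
    · obtain ⟨h1, h2⟩ := Finset.mem_filter.1 ha
      exact Finset.mem_filter.2 ⟨h1, h2.trans hlt⟩
  have hnm : i ∉ (Ke cl t s T).filter (fun i'' => i'' < i) := by
    simp [Finset.mem_filter]
  calc av cl t s T i + (s i + Pc cl t s T i)
      = ∑ a ∈ insert i ((Ke cl t s T).filter (fun i'' => i'' < i)),
          (s a + Pc cl t s T a) := by rw [Finset.sum_insert hnm, av]; ring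
    _ ≤ av cl t s T i' :=
        Finset.sum_le_sum_of_subset_of_nonneg hins (fun a _ _ => by
          have := Pc_nonneg cl t s T ht a; have := (hs a).le; linarith)

include ht hs in
lemma av_add_le_Vv {i : γ} (hi : i ∈ Ke cl t s T) :
    av cl t s T i + (s i + Pc cl t s T i) ≤ Vv cl t s T := by
  have hins : insert i ((Ke cl t s T).filter (fun i'' => i'' < i)) ⊆ Ke cl t s T := by
    intro a ha
    rcases Finset.mem_insert.1 ha with rfl | ha
    · exact hi
    · exact (Finset.mem_filter.1 ha).1
  have hnm : i ∉ (Ke cl t s T).filter (fun i'' => i'' < i) := by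
    simp [Finset.mem_filter]
  calc av cl t s T i + (s i + Pc cl t s T i)
      = ∑ a ∈ insert i ((Ke cl t s T).filter (fun i'' => i'' < i)),
          (s a + Pc cl t s T a) := by rw [Finset.sum_insert hnm, av]; ring
    _ ≤ Vv cl t s T :=
        Finset.sum_le_sum_of_subset_of_nonneg hins (fun a _ _ => by
          have := Pc_nonneg cl t s T ht a; have := (hs a).le; linarith)

include ht in
lemma pv_ge (j : ι) : av cl t s T (cl j) + s (cl j) ≤ pv cl t s T j := by
  have : 0 ≤ ∑ j' ∈ (univ.filter (fun j' => cl j' = cl j)).filter (fun j' => j' < j), t j' :=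
    Finset.sum_nonneg fun j' _ => (ht j').le
  rw [pv]; linarith

include ht in
lemma pv_add_le (j : ι) :
    pv cl t s T j + t j ≤ av cl t s T (cl j) + s (cl j) + Pc cl t s T (cl j) := by
  have hins : insert j ((univ.filter (fun j' => cl j' = cl j)).filter (fun j' => j' < j))
      ⊆ univ.filter (fun j' => cl j' = cl j) := by
    intro a ha
    rcases Finset.mem_insert.1 ha with rfl | ha
    · exact Finset.mem_filter.2 ⟨Finset.mem_univ _, rfl⟩
    · exact (Finset.mem_filter.1 ha).1
  have hnm : j ∉ (univ.filter (fun j' => cl j' = cl j)).filter (fun j' => j' < j) := by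
    simp [Finset.mem_filter]
  have key : (∑ j' ∈ (univ.filter (fun j' => cl j' = cl j)).filter (fun j' => j' < j), t j')
      + t j ≤ Pc cl t s T (cl j) := by
    calc _ = ∑ a ∈ insert j ((univ.filter (fun j' => cl j' = cl j)).filter (fun j' => j' < j)),
          t a := by rw [Finset.sum_insert hnm]; ring
      _ ≤ _ := Finset.sum_le_sum_of_subset_of_nonneg hins (fun a _ _ => (ht a).le)
  rw [pv]; linarith

include ht hs in
lemma pv_nonneg (j : ι) : 0 ≤ pv cl t s T j := by
  have h1 := av_nonneg cl t s T ht hs (cl j)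
  have := (hs (cl j)).le
  have := pv_ge cl t s T ht j
  linarith

lemma capv_nonneg (k : ℤ) : 0 ≤ capv cl t s T k := le_max_left _ _

lemma Fv_succ (n : ℕ) : Fv cl t s T (n + 1) = Fv cl t s T n + capv cl t s T (n : ℤ) := by
  rw [Fv, Fv, Finset.sum_range_succ]

lemma Fv_zero : Fv cl t s T 0 = 0 := by simp [Fv]

include ht hT in
lemma Dv_le (k : ℤ) (hsT : ∀ i, s i ≤ T) (hcl : ∀ i : γ, ∃ j, cl j = i) :
    Dv cl t s T k ≤ 3 / 2 * T := by
  set S := (Ee cl t s T).filter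
    (fun i => Bv cl t s T i ≤ k ∧ k < Bv cl t s T i + bi cl t s T i) with hS
  rcases Finset.eq_empty_or_nonempty S with h | ⟨i, hi⟩
  · rw [Dv, ← hS, h, Finset.sum_empty]; linarith
  · have hsub : ∀ a ∈ S, ∀ b ∈ S, a = b := by
      intro a ha b hb
      obtain ⟨ha1, ha2⟩ := Finset.mem_filter.1 ha
      obtain ⟨hb1, hb2⟩ := Finset.mem_filter.1 hb
      exact Dv_window_unique cl t s T ht hT ha1 hb1 ha2 hb2
    have hSeq : S = {i} := by
      apply Finset.eq_singleton_iff_unique_mem.2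
      exact ⟨hi, fun b hb => hsub b hb i hi⟩
    rw [Dv, ← hS, hSeq, Finset.sum_singleton]
    have h1 := hsT i
    have h2 := Pc_div_bi_le cl t s T ht hT (hcl i)
    linarith

include ht hT in
lemma sum_Dv (m : ℕ) (hcl : ∀ i : γ, ∃ j, cl j = i)
    (hm : ∑ i ∈ Ee cl t s T, bi cl t s T i ≤ (m : ℤ)) :
    ∑ k ∈ Finset.range m, Dv cl t s T (k : ℤ)
      = ∑ i ∈ Ee cl t s T, ((bi cl t s T i : ℝ) * s i + Pc cl t s T i) := by
  have step1 : ∀ k : ℤ, Dv cl t s T k = ∑ i ∈ Ee cl t s T,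
      (if Bv cl t s T i ≤ k ∧ k < Bv cl t s T i + bi cl t s T i
       then s i + Pc cl t s T i / (bi cl t s T i : ℝ) else 0) := by
    intro k; rw [Dv, Finset.sum_filter]
  calc ∑ k ∈ Finset.range m, Dv cl t s T (k : ℤ)
      = ∑ i ∈ Ee cl t s T, ∑ k ∈ Finset.range m,
        (if Bv cl t s T i ≤ (k:ℤ) ∧ (k:ℤ) < Bv cl t s T i + bi cl t s T i
         then s i + Pc cl t s T i / (bi cl t s T i : ℝ) else 0) := by
        rw [Finset.sum_comm]
        exact Finset.sum_congr rfl fun k _ => step1 k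
    _ = ∑ i ∈ Ee cl t s T, ((bi cl t s T i : ℝ) * s i + Pc cl t s T i) := by
        apply Finset.sum_congr rfl
        intro i hi
        rw [count_indicator m _ _ _ (Bv_nonneg cl t s T ht hT i) (bi_nonneg cl t s T ht hT i)
          (le_trans (Bv_add_le cl t s T ht hT hi) hm)]
        rw [bi_mul cl t s T ht hT i (hcl i)]

lemma sum_Ke_Ee (f : γ → ℝ) :
    (∑ i, f i) = ∑ i ∈ Ke cl t s T, f i + ∑ i ∈ Ee cl t s T, f i := by
  rw [Ke, Ee, ← Finset.sum_filter_add_sum_filter_not univ (fun i => s i ≤ T / 2) f]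
  congr 1
  apply Finset.sum_congr _ (fun _ _ => rfl)
  apply Finset.filter_congr
  intro i _
  simp [not_le]

include ht hs hT in
lemma Vv_le_Fv (m : ℕ) (hcl : ∀ i : γ, ∃ j, cl j = i)
    (hm : ∑ i ∈ Ee cl t s T, bi cl t s T i ≤ (m : ℤ))
    (hL' : (∑ j, t j) + (∑ i ∈ Ke cl t s T, s i) +
      (∑ i ∈ Ee cl t s T, (bi cl t s T i : ℝ) * s i) ≤ (m : ℝ) * T) :
    Vv cl t s T ≤ Fv cl t s T m := by
  have hfib : ∑ i : γ, Pc cl t s T i = ∑ j, t j := by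
    rw [show (∑ i : γ, Pc cl t s T i) = ∑ i : γ, ∑ j ∈ univ.filter (fun j => cl j = i), t j
      from rfl]
    exact Finset.sum_fiberwise univ cl t
  have hsplitP : ∑ i : γ, Pc cl t s T i
      = ∑ i ∈ Ke cl t s T, Pc cl t s T i + ∑ i ∈ Ee cl t s T, Pc cl t s T i := by
    rw [Ke, Ee]
    rw [← Finset.sum_filter_add_sum_filter_not univ (fun i => s i ≤ T / 2) (Pc cl t s T)]
    congr 1
    apply Finset.sum_congr _ (fun _ _ => rfl)
    apply Finset.filter_congr
    intro i _
    simp [not_le]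
  have hD := sum_Dv cl t s T ht hT m hcl hm
  have hcap : ∀ k ∈ Finset.range m, T - Dv cl t s T (k : ℤ) ≤ capv cl t s T (k : ℤ) :=
    fun k _ => le_max_right _ _
  have h1 : (m : ℝ) * T - ∑ k ∈ Finset.range m, Dv cl t s T (k : ℤ) ≤ Fv cl t s T m := by
    have := Finset.sum_le_sum hcap
    rw [Finset.sum_sub_distrib, Finset.sum_const, Finset.card_range] at this
    rw [Fv]
    have : (m : ℝ) * T = (m : ℕ) • T := by simp [nsmul_eq_mul]
    linarith [Finset.sum_le_sum hcap, this]
  have hVv : Vv cl t s T = ∑ i ∈ Ke cl t s T, s i + ∑ i ∈ Ke cl t s T, Pc cl t s T i := by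
    rw [Vv, Finset.sum_add_distrib]
  have hDsum : ∑ i ∈ Ee cl t s T, ((bi cl t s T i : ℝ) * s i + Pc cl t s T i)
      = ∑ i ∈ Ee cl t s T, (bi cl t s T i : ℝ) * s i + ∑ i ∈ Ee cl t s T, Pc cl t s T i := by
    rw [Finset.sum_add_distrib]
  rw [hD, hDsum] at h1
  rw [hVv]
  rw [← hfib, hsplitP] at hL'
  linarith

end basic

variable {υ : Type*} [Fintype υ]

/-- the splittable schedule -/
def xs (cl : ι → γ) (t : ι → ℝ) (s : γ → ℝ) (T : ℝ) (m : ℕ) (e : υ ≃ Fin m)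
    (j : ι) (u : υ) : ℝ :=
  if T / 2 < s (cl j) then
    (if Bv cl t s T (cl j) ≤ ((e u).val : ℤ) ∧
        ((e u).val : ℤ) < Bv cl t s T (cl j) + bi cl t s T (cl j)
     then t j / (bi cl t s T (cl j) : ℝ) else 0)
  else
    clampF (Fv cl t s T (e u).val) (Fv cl t s T (e u).val + capv cl t s T ((e u).val : ℤ))
      (pv cl t s T j + t j)
    - clampF (Fv cl t s T (e u).val) (Fv cl t s T (e u).val + capv cl t s T ((e u).val : ℤ))
      (pv cl t s T j)

section sched
variable (cl : ι → γ) (t : ι → ℝ) (s : γ → ℝ) (T : ℝ) (m : ℕ) (e : υ ≃ Fin m)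
variable (ht : ∀ j, 0 < t j) (hs : ∀ i, 0 < s i) (hT : 0 < T)

include ht hT in
lemma xs_nonneg (j : ι) (u : υ) : 0 ≤ xs cl t s T m e j u := by
  rw [xs]
  split_ifs with h1 h2
  · have hb : (0:ℤ) ≤ bi cl t s T (cl j) := bi_nonneg cl t s T ht hT (cl j)
    have hb' : (0:ℝ) ≤ (bi cl t s T (cl j) : ℝ) := by exact_mod_cast hb
    exact div_nonneg (ht j).le hb'
  · exact le_refl 0
  · have : pv cl t s T j ≤ pv cl t s T j + t j := by linarith [ht j]
    linarith [clampF_mono (Fv cl t s T (e u).val)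
      (Fv cl t s T (e u).val + capv cl t s T ((e u).val : ℤ)) this]

include ht hs hT in
lemma xs_sum (hcl : ∀ i : γ, ∃ j, cl j = i)
    (hm : ∑ i ∈ Ee cl t s T, bi cl t s T i ≤ (m : ℤ))
    (hL' : (∑ j, t j) + (∑ i ∈ Ke cl t s T, s i) +
      (∑ i ∈ Ee cl t s T, (bi cl t s T i : ℝ) * s i) ≤ (m : ℝ) * T)
    (j : ι) : (∑ u, xs cl t s T m e j u) = t j := by
  by_cases hexp : T / 2 < s (cl j)
  · simp only [xs, if_pos hexp]
    rw [← Equiv.sum_comp e.symm]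
    simp only [Equiv.apply_symm_apply]
    rw [Fin.sum_univ_eq_sum_range (fun k =>
      if Bv cl t s T (cl j) ≤ (k : ℤ) ∧
        (k : ℤ) < Bv cl t s T (cl j) + bi cl t s T (cl j)
      then t j / (bi cl t s T (cl j) : ℝ) else 0) m]
    have hje : cl j ∈ Ee cl t s T := Finset.mem_filter.2 ⟨Finset.mem_univ _, hexp⟩
    rw [count_indicator m _ _ _ (Bv_nonneg cl t s T ht hT (cl j))
      (bi_nonneg cl t s T ht hT (cl j)) (le_trans (Bv_add_le cl t s T ht hT hje) hm)]
    have hb : (0:ℤ) < bi cl t s T (cl j) := bi_pos cl t s T ht hT ⟨j, rfl⟩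
    have hb' : ((bi cl t s T (cl j) : ℝ)) ≠ 0 := by
      have : (0:ℝ) < (bi cl t s T (cl j) : ℝ) := by exact_mod_cast hb
      exact this.ne'
    field_simp
  · push_neg at hexp
    simp only [xs, if_neg (not_lt.2 hexp)]
    have hke : cl j ∈ Ke cl t s T := Finset.mem_filter.2 ⟨Finset.mem_univ _, hexp⟩
    have hpt : pv cl t s T j ≤ pv cl t s T j + t j := by linarith [ht j]
    have hterm : ∀ k : ℕ,
        clampF (Fv cl t s T k) (Fv cl t s T k + capv cl t s T (k : ℤ)) (pv cl t s T j + t j)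
        - clampF (Fv cl t s T k) (Fv cl t s T k + capv cl t s T (k : ℤ)) (pv cl t s T j)
        = clampF (pv cl t s T j) (pv cl t s T j + t j) (Fv cl t s T (k + 1))
        - clampF (pv cl t s T j) (pv cl t s T j + t j) (Fv cl t s T k) := by
      intro k
      rw [clampF_swap (by linarith [capv_nonneg cl t s T (k : ℤ)]) hpt, Fv_succ]
    rw [← Equiv.sum_comp e.symm]
    simp only [Equiv.apply_symm_apply]
    rw [Fin.sum_univ_eq_sum_range (fun k =>
      clampF (Fv cl t s T k) (Fv cl t s T k + capv cl t s T (k : ℤ)) (pv cl t s T j + t j)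
      - clampF (Fv cl t s T k) (Fv cl t s T k + capv cl t s T (k : ℤ)) (pv cl t s T j)) m]
    rw [Finset.sum_congr rfl (fun k _ => hterm k), Finset.sum_range_sub
      (fun n => clampF (pv cl t s T j) (pv cl t s T j + t j) (Fv cl t s T n))]
    have h1 : pv cl t s T j + t j ≤ Fv cl t s T m := by
      calc pv cl t s T j + t j
          ≤ av cl t s T (cl j) + s (cl j) + Pc cl t s T (cl j) := pv_add_le cl t s T ht j
        _ ≤ Vv cl t s T := by
            have := av_add_le_Vv cl t s T ht hs hke; linarith
        _ ≤ Fv cl t s T m := Vv_le_Fv cl t s T ht hs hT m hcl hm hL'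
    rw [Fv_zero, clampF_right h1 hpt, clampF_left (pv_nonneg cl t s T ht hs j) hpt]
    ring

include ht hs hT in
lemma load_le (hsT : ∀ i, s i ≤ T) (hcl : ∀ i : γ, ∃ j, cl j = i) (u : υ) :
    (∑ j, xs cl t s T m e j u) +
      (∑ i ∈ univ.filter (fun i => ∃ j, cl j = i ∧ 0 < xs cl t s T m e j u), s i)
      ≤ 3 / 2 * T := by
  set A := Fv cl t s T (e u).val with hA
  set cp := capv cl t s T ((e u).val : ℤ) with hcp
  have hcp0 : 0 ≤ cp := capv_nonneg cl t s T _
  have hAB : A ≤ A + cp := by linarith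
  -- inner sums for cheap classes
  have hinner_cheap : ∀ i ∈ Ke cl t s T,
      (∑ j ∈ univ.filter (fun j => cl j = i), xs cl t s T m e j u)
      = clampF A (A + cp) (av cl t s T i + (s i + Pc cl t s T i))
        - clampF A (A + cp) (av cl t s T i + s i) := by
    intro i hi
    have hsi : s i ≤ T / 2 := (Finset.mem_filter.1 hi).2
    have hterm : ∀ j ∈ univ.filter (fun j => cl j = i),
        xs cl t s T m e j u
        = clampF A (A + cp) ((av cl t s T i + s i +
            ∑ j' ∈ (univ.filter (fun j' => cl j' = i)).filter (fun j' => j' < j), t j') + t j)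
          - clampF A (A + cp) (av cl t s T i + s i +
            ∑ j' ∈ (univ.filter (fun j' => cl j' = i)).filter (fun j' => j' < j), t j') := by
      intro j hj
      have hji : cl j = i := (Finset.mem_filter.1 hj).2
      rw [xs, hji, if_neg (not_lt.2 hsi), hA, hcp]
      have hpj : pv cl t s T j = av cl t s T i + s i +
          ∑ j' ∈ (univ.filter (fun j' => cl j' = i)).filter (fun j' => j' < j), t j' := by
        rw [pv, hji]
      rw [hpj]
    rw [Finset.sum_congr rfl hterm]
    have h := tele (clampF A (A + cp)) t (av cl t s T i + s i)
      (univ.filter (fun j => cl j = i))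
    rw [h]
    have hpc : av cl t s T i + s i + ∑ j ∈ univ.filter (fun j => cl j = i), t j
        = av cl t s T i + (s i + Pc cl t s T i) := by rw [Pc]; ring
    rw [hpc]
  -- inner sums for expensive classes
  have hinner_exp : ∀ i ∈ Ee cl t s T,
      (∑ j ∈ univ.filter (fun j => cl j = i), xs cl t s T m e j u)
      = if Bv cl t s T i ≤ ((e u).val : ℤ) ∧
          ((e u).val : ℤ) < Bv cl t s T i + bi cl t s T i
        then Pc cl t s T i / (bi cl t s T i : ℝ) else 0 := by
    intro i hi
    have hsi : T / 2 < s i := (Finset.mem_filter.1 hi).2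
    have hterm : ∀ j ∈ univ.filter (fun j => cl j = i),
        xs cl t s T m e j u
        = if Bv cl t s T i ≤ ((e u).val : ℤ) ∧
            ((e u).val : ℤ) < Bv cl t s T i + bi cl t s T i
          then t j / (bi cl t s T i : ℝ) else 0 := by
      intro j hj
      have hji : cl j = i := (Finset.mem_filter.1 hj).2
      rw [xs, hji, if_pos hsi]
    rw [Finset.sum_congr rfl hterm]
    by_cases hc : Bv cl t s T i ≤ ((e u).val : ℤ) ∧
        ((e u).val : ℤ) < Bv cl t s T i + bi cl t s T i
    · simp only [if_pos hc]
      rw [Pc, Finset.sum_div]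
    · simp [hc]
  -- split the job sum
  have hjobs : (∑ j, xs cl t s T m e j u)
      = (∑ i ∈ Ke cl t s T, ∑ j ∈ univ.filter (fun j => cl j = i), xs cl t s T m e j u)
      + (∑ i ∈ Ee cl t s T, ∑ j ∈ univ.filter (fun j => cl j = i), xs cl t s T m e j u) := by
    rw [← Finset.sum_fiberwise univ cl (fun j => xs cl t s T m e j u)]
    exact sum_Ke_Ee cl t s T _
  -- split the setup sum
  have hsetups : (∑ i ∈ univ.filter (fun i => ∃ j, cl j = i ∧ 0 < xs cl t s T m e j u), s i)
      = (∑ i ∈ (Ke cl t s T).filter (fun i => ∃ j, cl j = i ∧ 0 < xs cl t s T m e j u), s i)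
      + (∑ i ∈ (Ee cl t s T).filter (fun i => ∃ j, cl j = i ∧ 0 < xs cl t s T m e j u), s i) := by
    rw [Finset.sum_filter, sum_Ke_Ee cl t s T, ← Finset.sum_filter, ← Finset.sum_filter]
  -- expensive charged classes are exactly those whose window contains this machine
  have hEe_chg : (Ee cl t s T).filter (fun i => ∃ j, cl j = i ∧ 0 < xs cl t s T m e j u)
      = (Ee cl t s T).filter (fun i => Bv cl t s T i ≤ ((e u).val : ℤ) ∧
          ((e u).val : ℤ) < Bv cl t s T i + bi cl t s T i) := by
    ext i
    simp only [Finset.mem_filter]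
    constructor
    · rintro ⟨hi, j, hji, hxj⟩
      refine ⟨hi, ?_⟩
      have hsi : T / 2 < s i := (Finset.mem_filter.1 hi).2
      rw [xs, hji, if_pos hsi] at hxj
      by_contra hc
      rw [if_neg hc] at hxj
      exact lt_irrefl 0 hxj
    · rintro ⟨hi, hc⟩
      have hsi : T / 2 < s i := (Finset.mem_filter.1 hi).2
      obtain ⟨j, hji⟩ := hcl i
      refine ⟨hi, j, hji, ?_⟩
      rw [xs, hji, if_pos hsi, if_pos hc]
      have hb : (0:ℤ) < bi cl t s T i := bi_pos cl t s T ht hT ⟨j, hji⟩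
      have hb' : (0:ℝ) < (bi cl t s T i : ℝ) := by exact_mod_cast hb
      exact div_pos (ht j) hb'
  -- expensive total equals Dv
  have hexp_total : (∑ i ∈ Ee cl t s T, ∑ j ∈ univ.filter (fun j => cl j = i),
        xs cl t s T m e j u)
      + (∑ i ∈ (Ee cl t s T).filter (fun i => ∃ j, cl j = i ∧ 0 < xs cl t s T m e j u), s i)
      = Dv cl t s T ((e u).val : ℤ) := by
    rw [Finset.sum_congr rfl hinner_exp, hEe_chg, ← Finset.sum_filter, Dv,
      ← Finset.sum_add_distrib]
    apply Finset.sum_congr rfl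
    intro i _
    ring
  -- cheap telescoping total
  have houter : (∑ i ∈ Ke cl t s T,
        (clampF A (A + cp) (av cl t s T i + (s i + Pc cl t s T i))
          - clampF A (A + cp) (av cl t s T i)))
      = clampF A (A + cp) (Vv cl t s T) - clampF A (A + cp) 0 := by
    have h := tele (clampF A (A + cp)) (fun i => s i + Pc cl t s T i) 0 (Ke cl t s T)
    simp only [zero_add] at h
    exact h
  -- setup pieces of cheap classes are nonnegative
  have hsetup_nonneg : ∀ i : γ,
      0 ≤ clampF A (A + cp) (av cl t s T i + s i) - clampF A (A + cp) (av cl t s T i) := by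
    intro i
    have : av cl t s T i ≤ av cl t s T i + s i := by linarith [(hs i).le]
    linarith [clampF_mono A (A + cp) this]
  have hinner_nonneg : ∀ i : γ,
      0 ≤ clampF A (A + cp) (av cl t s T i + (s i + Pc cl t s T i))
        - clampF A (A + cp) (av cl t s T i + s i) := by
    intro i
    have : av cl t s T i + s i ≤ av cl t s T i + (s i + Pc cl t s T i) := by
      linarith [Pc_nonneg cl t s T ht i]
    linarith [clampF_mono A (A + cp) this]
  -- the cheap part: processing plus setups of charged cheap classes
  set S1 := ((Ke cl t s T).filter (fun i => ∃ j, cl j = i ∧ 0 < xs cl t s T m e j u)).filter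
    (fun i => A ≤ av cl t s T i) with hS1
  set S2 := ((Ke cl t s T).filter (fun i => ∃ j, cl j = i ∧ 0 < xs cl t s T m e j u)).filter
    (fun i => ¬ A ≤ av cl t s T i) with hS2
  have hCS : (∑ i ∈ (Ke cl t s T).filter
        (fun i => ∃ j, cl j = i ∧ 0 < xs cl t s T m e j u), s i)
      = (∑ i ∈ S1, s i) + (∑ i ∈ S2, s i) :=
    (Finset.sum_filter_add_sum_filter_not _ _ _).symm
  -- facts about charged cheap classes
  have hchg_facts : ∀ i ∈ (Ke cl t s T).filter
      (fun i => ∃ j, cl j = i ∧ 0 < xs cl t s T m e j u),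
      av cl t s T i + s i < A + cp ∧ A < av cl t s T i + s i + Pc cl t s T i ∧ A < A + cp := by
    intro i hi
    obtain ⟨hiK, j, hji, hxj⟩ := Finset.mem_filter.1 hi
    have hsi : s i ≤ T / 2 := (Finset.mem_filter.1 hiK).2
    rw [xs, hji, if_neg (not_lt.2 hsi), ← hA, ← hcp] at hxj
    obtain ⟨h1, h2⟩ := clampF_pos hAB hxj
    have h3 : A < A + cp := by
      have hu := clampF_le (pv cl t s T j + t j) hAB
      have hl := le_clampF A (A + cp) (pv cl t s T j)
      linarith
    have hge := pv_ge cl t s T ht j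
    have hle := pv_add_le cl t s T ht j
    rw [hji] at hge hle
    exact ⟨by linarith, by linarith, h3⟩
  -- S1 : charged cheap classes starting inside the machine interval
  have hS1_eq : ∀ i ∈ S1, clampF A (A + cp) (av cl t s T i + s i)
      - clampF A (A + cp) (av cl t s T i) = s i := by
    intro i hi
    obtain ⟨hi', hAi⟩ := Finset.mem_filter.1 hi
    obtain ⟨h1, _, _⟩ := hchg_facts i hi'
    have hKi : i ∈ Ke cl t s T := (Finset.mem_filter.1 hi').1
    rw [clampF_eq_self (by linarith [(hs i).le]) (by linarith),
      clampF_eq_self hAi (by linarith [(hs i).le])]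
    ring
  have hS1_le : (∑ i ∈ S1, s i)
      ≤ ∑ i ∈ Ke cl t s T, (clampF A (A + cp) (av cl t s T i + s i)
          - clampF A (A + cp) (av cl t s T i)) := by
    calc (∑ i ∈ S1, s i)
        = ∑ i ∈ S1, (clampF A (A + cp) (av cl t s T i + s i)
            - clampF A (A + cp) (av cl t s T i)) :=
          (Finset.sum_congr rfl hS1_eq).symm
      _ ≤ _ := Finset.sum_le_sum_of_subset_of_nonneg
          (by intro a ha;
              exact (Finset.mem_filter.1 ((Finset.mem_filter.1 ha).1)).1)
          (fun i _ _ => hsetup_nonneg i)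
  -- S2 : at most one charged cheap class straddles the left machine boundary
  have hS2_le : (∑ i ∈ S2, s i) ≤ T / 2 := by
    have hcard : ∀ a ∈ S2, ∀ b ∈ S2, a = b := by
      intro a ha b hb
      obtain ⟨ha', hAa⟩ := Finset.mem_filter.1 ha
      obtain ⟨hb', hAb⟩ := Finset.mem_filter.1 hb
      push_neg at hAa hAb
      obtain ⟨_, ha2, _⟩ := hchg_facts a ha'
      obtain ⟨_, hb2, _⟩ := hchg_facts b hb'
      have hKa : a ∈ Ke cl t s T := (Finset.mem_filter.1 ha').1
      have hKb : b ∈ Ke cl t s T := (Finset.mem_filter.1 hb').1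
      by_contra hne
      rcases lt_or_gt_of_ne hne with h | h
      · have := av_mono cl t s T ht hs hKa h; linarith
      · have := av_mono cl t s T ht hs hKb h; linarith
    rcases Finset.eq_empty_or_nonempty S2 with h | ⟨a, hamem⟩
    · rw [h, Finset.sum_empty]; linarith
    · have : S2 = {a} := Finset.eq_singleton_iff_unique_mem.2
        ⟨hamem, fun b hb => hcard b hb a hamem⟩
      rw [this, Finset.sum_singleton]
      have hKa : a ∈ Ke cl t s T :=
        (Finset.mem_filter.1 ((Finset.mem_filter.1 hamem).1)).1
      exact (Finset.mem_filter.1 hKa).2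
  -- total cheap ≤ capacity + T/2  (in either case below)
  have hsum_split : ∑ i ∈ Ke cl t s T,
        (clampF A (A + cp) (av cl t s T i + (s i + Pc cl t s T i))
          - clampF A (A + cp) (av cl t s T i))
      = (∑ i ∈ Ke cl t s T, (clampF A (A + cp) (av cl t s T i + (s i + Pc cl t s T i))
          - clampF A (A + cp) (av cl t s T i + s i)))
      + (∑ i ∈ Ke cl t s T, (clampF A (A + cp) (av cl t s T i + s i)
          - clampF A (A + cp) (av cl t s T i))) := by
    rw [← Finset.sum_add_distrib]
    apply Finset.sum_congr rfl
    intro i _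
    ring
  have htele_le : clampF A (A + cp) (Vv cl t s T) - clampF A (A + cp) 0 ≤ cp := by
    have h1 := clampF_le (Vv cl t s T) hAB
    have h2 := le_clampF A (A + cp) (0:ℝ)
    linarith
  -- assemble
  have hKsetup_nonneg : 0 ≤ ∑ i ∈ Ke cl t s T,
      (clampF A (A + cp) (av cl t s T i + s i) - clampF A (A + cp) (av cl t s T i)) :=
    Finset.sum_nonneg fun i _ => hsetup_nonneg i
  have hCP_nonneg : 0 ≤ ∑ i ∈ Ke cl t s T,
      (clampF A (A + cp) (av cl t s T i + (s i + Pc cl t s T i))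
        - clampF A (A + cp) (av cl t s T i + s i)) :=
    Finset.sum_nonneg fun i _ => hinner_nonneg i
  have hkey : (∑ i ∈ Ke cl t s T,
      (clampF A (A + cp) (av cl t s T i + (s i + Pc cl t s T i))
        - clampF A (A + cp) (av cl t s T i + s i)))
      + (∑ i ∈ Ke cl t s T,
      (clampF A (A + cp) (av cl t s T i + s i) - clampF A (A + cp) (av cl t s T i))) ≤ cp := by
    rw [← hsum_split, houter]
    exact htele_le
  rw [hjobs, hsetups, Finset.sum_congr rfl hinner_cheap]
  rcases le_or_gt (Dv cl t s T ((e u).val : ℤ)) T with hDle | hDgt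
  · have hcpeq : cp = T - Dv cl t s T ((e u).val : ℤ) := by
      rw [hcp, capv]
      exact max_eq_right (by linarith)
    linarith [hexp_total, hCS, hS1_le, hS2_le, hkey]
  · have hcpeq : cp = 0 := by
      rw [hcp, capv]
      exact max_eq_left (by linarith)
    have hempty : (Ke cl t s T).filter (fun i => ∃ j, cl j = i ∧ 0 < xs cl t s T m e j u)
        = ∅ := by
      rw [Finset.eq_empty_iff_forall_notMem]
      intro i hi
      obtain ⟨_, _, h3⟩ := hchg_facts i hi
      rw [hcpeq] at h3
      linarith
    have hDle' := Dv_le cl t s T ht hT ((e u).val : ℤ) hsT hcl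
    rw [hempty, Finset.sum_empty]
    linarith [hexp_total, hkey]

end sched
end SpAux


/-- A splittable schedule: each job `j` is split into nonnegative fractions `x j u` on the
machines `u`, summing to the processing time `t j`. -/
structure SplitSchedule {υ ι : Type*} [Fintype υ] (t : ι → ℝ) where
  x : ι → υ → ℝ
  nonneg : ∀ j u, 0 ≤ x j u
  sum_eq : ∀ j, (∑ u, x j u) = t j

/-- The load of machine `u` in a splittable schedule: total processing time placed on `u`
plus one setup time for each class having positive load on `u`. -/
noncomputable def spLoad {υ γ ι : Type*} [Fintype υ] [Fintype γ] [Fintype ι]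
    (cl : ι → γ) (t : ι → ℝ) (s : γ → ℝ) (σ : SplitSchedule (υ := υ) t) (u : υ) : ℝ :=
  (∑ j, σ.x j u) +
  (∑ i ∈ univ.filter (fun i => ∃ j, cl j = i ∧ 0 < σ.x j u), s i)

/-- The makespan of a splittable schedule: the maximum machine load. -/
noncomputable def spMakespan {υ γ ι : Type*} [Fintype υ] [Fintype γ] [Fintype ι]
    [Nonempty υ] (cl : ι → γ) (t : ι → ℝ) (s : γ → ℝ) (σ : SplitSchedule (υ := υ) t) : ℝ :=
  univ.sup' univ_nonempty (spLoad cl t s σ)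

/-- Theorem 3.5 (ii), splittable 3/2-dual approximation: if `s_i ≤ T` for all classes,
`m·T ≥ L_split` and `m ≥ m_exp`, then there is a splittable schedule with makespan at most
`(3/2)·T`. -/
theorem sp_dual_approximation {υ γ ι : Type*} [Fintype υ] [Fintype γ] [Fintype ι]
    [Nonempty υ]
    (cl : ι → γ) (t : ι → ℝ) (s : γ → ℝ)
    (ht : ∀ j, 0 < t j) (hs : ∀ i, 0 < s i)
    (hcl : ∀ i : γ, ∃ j, cl j = i)
    (T : ℝ) (hT : 0 < T) (hsT : ∀ i, s i ≤ T)
    (hL : ((∑ j, t j) + (∑ i ∈ univ.filter (fun i : γ => s i ≤ T / 2), s i) +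
      (∑ i ∈ univ.filter (fun i : γ => T / 2 < s i),
        (⌈2 * (∑ j ∈ univ.filter (fun j => cl j = i), t j) / T⌉ : ℝ) * s i))
      ≤ (Fintype.card υ : ℝ) * T)
    (hm : (∑ i ∈ univ.filter (fun i : γ => T / 2 < s i),
        ⌈2 * (∑ j ∈ univ.filter (fun j => cl j = i), t j) / T⌉)
      ≤ (Fintype.card υ : ℤ)) :
    ∃ σ : SplitSchedule (υ := υ) t, spMakespan cl t s σ ≤ 3 / 2 * T := by
  classical
  letI : LinearOrder γ := LinearOrder.lift' (Fintype.equivFin γ) (Fintype.equivFin γ).injective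
  letI : LinearOrder ι := LinearOrder.lift' (Fintype.equivFin ι) (Fintype.equivFin ι).injective
  set m := Fintype.card υ with hmcard
  set e : υ ≃ Fin m := Fintype.equivFin υ with he
  have hm' : ∑ i ∈ Ee cl t s T, bi cl t s T i ≤ (m : ℤ) := by
    convert hm using 1
    simp only [Ee, bi, Pc]
    apply Finset.sum_congr
    · congr
    · intro i _; congr
  have hL' : (∑ j, t j) + (∑ i ∈ Ke cl t s T, s i) +
      (∑ i ∈ Ee cl t s T, (bi cl t s T i : ℝ) * s i) ≤ (m : ℝ) * T := by
    convert hL using 1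
    simp only [Ke, Ee, bi, Pc]
    refine congrArg₂ (· + ·) (congrArg₂ (· + ·) rfl ?_) ?_
    · congr
    · exact Finset.sum_congr (by congr) (fun i _ => by congr)
  refine ⟨⟨xs cl t s T m e,
    fun j u => xs_nonneg cl t s T m e ht hT j u,
    fun j => xs_sum cl t s T m e ht hs hT hcl hm' hL' j⟩, ?_⟩
  rw [spMakespan]
  apply Finset.sup'_le
  intro u _
  rw [spLoad]
  have hload := load_le cl t s T m e ht hs hT hsT hcl u
  convert hload using 2
  · rfl
  apply Finset.sum_congr
  · congr
  · intro i _; rfl
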